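/- (Fact 1) Let n, d, k, i, j be integers with 2 ≤ d ≤ n, 0 ≤ i ≤ k ≤ n, and 0 ≤ j ≤ n − k. Let A ∈ {0,1}^n be the vector whose first k coordinates are 0 and whose last n − k coordinates are 1, and let V_{i,j} ∈ {0,1}^n be obtained from A by flipping the first i of the first k coordinates (to 1) and the first j of the last n − k coordinates (to 0). For a vector V ∈ {0,1}^n and a d-element subset E of [n], let f_E(V) = 1 if all coordinates of V indexed by E are equal and f_E(V) = 0 otherwise. Then the number of d-element subsets E of [n] with f_E(A) ≠ f_E(V_{i,j}) equals Σ_{ℓ=1}^{d-1} C(i,ℓ)C(k−i, d−ℓ) + Σ_{ℓ=1}^{d-1} C(j,ℓ)C(n−k−j, d−ℓ) + Σ_{ℓ=1}^{d-1} C(i,ℓ)C(n−k−j, d−ℓ) + Σ_{ℓ=1}^{d-1} C(k−i,ℓ)C(j, d−ℓ). -/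

import Mathlib

/-- Homogeneity measurement of a labeling `V` on a hyperedge `E`:
`1` iff all coordinates of `V` indexed by `E` are equal. -/
def fE {n : ℕ} (V : Fin n → Bool) (E : Finset (Fin n)) : Bool :=
  decide (∀ a ∈ E, ∀ b ∈ E, V a = V b)

/-- The labeling whose first `k` coordinates are `0` and last `n-k` coordinates are `1`. -/
def baseVec (n k : ℕ) : Fin n → Bool := fun x => decide (k ≤ (x : ℕ))

/-- The labeling obtained from `baseVec n k` by flipping the first `i` of the first `k`
coordinates (to `1`) and the first `j` of the last `n-k` coordinates (to `0`). -/
def flipVec (n k i j : ℕ) : Fin n → Bool := fun x => decide ((x : ℕ) < i ∨ k + j ≤ (x : ℕ))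

/-- Interval `[a, b)` inside `Fin n` as a finset. -/
def Iv (n a b : ℕ) : Finset (Fin n) :=
  (Finset.univ : Finset (Fin n)).filter (fun x : Fin n => a ≤ (x : ℕ) ∧ (x : ℕ) < b)

lemma mem_Iv {n a b : ℕ} {x : Fin n} : x ∈ Iv n a b ↔ a ≤ (x : ℕ) ∧ (x : ℕ) < b := by
  simp [Iv]

lemma card_Iv (n a b : ℕ) (hb : b ≤ n) : (Iv n a b).card = b - a := by
  rw [← Nat.card_Ico a b]
  refine Finset.card_bij' (fun x _ => (x : ℕ))
    (fun y hy => (⟨y, by simp at hy; omega⟩ : Fin n)) ?_ ?_ ?_ ?_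
  · intro x hx; simp [Iv] at hx ⊢; omega
  · intro y hy; simp [Iv] at hy ⊢; exact hy
  · intro x hx; simp
  · intro y hy; simp

lemma disjoint_Iv {n a b a' b' : ℕ} (h : b ≤ a') : Disjoint (Iv n a b) (Iv n a' b') := by
  rw [Finset.disjoint_left]
  intro x hx hx'
  rw [mem_Iv] at hx hx'
  omega

lemma union_inter_left' {α : Type*} [DecidableEq α] {S T P Q : Finset α} (hST : Disjoint S T)
    (h1 : P ⊆ S) (h2 : Q ⊆ T) : (P ∪ Q) ∩ S = P := by
  ext x; simp only [Finset.mem_inter, Finset.mem_union]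
  constructor
  · rintro ⟨h | h, hxS⟩
    · exact h
    · exact absurd hxS (Finset.disjoint_right.mp hST (h2 h))
  · intro hx; exact ⟨Or.inl hx, h1 hx⟩

theorem count_split {n : ℕ} (d : ℕ) (S T : Finset (Fin n)) (hST : Disjoint S T) :
    (((S ∪ T).powersetCard d).filter
      (fun E => (E ∩ S).Nonempty ∧ (E ∩ T).Nonempty)).card
    = ∑ ℓ ∈ Finset.Icc 1 (d-1), S.card.choose ℓ * T.card.choose (d-ℓ) := by
  classical
  have hsplit : ∀ E : Finset (Fin n), E ⊆ S ∪ T → (E ∩ S) ∪ (E ∩ T) = E := by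
    intro E hE
    rw [← Finset.inter_union_distrib_left, Finset.inter_eq_left.2 hE]
  have hdisj : ∀ E : Finset (Fin n), Disjoint (E ∩ S) (E ∩ T) :=
    fun E => hST.mono Finset.inter_subset_right Finset.inter_subset_right
  have hcard : ∀ E : Finset (Fin n), E ⊆ S ∪ T → E.card = d →
      (E ∩ S).card + (E ∩ T).card = d := by
    intro E hE hc
    rw [← Finset.card_union_of_disjoint (hdisj E), hsplit E hE, hc]
  rw [Finset.card_eq_sum_card_fiberwise (f := fun E => (E ∩ S).card)
    (t := Finset.Icc 1 (d-1)) ?_]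
  · apply Finset.sum_congr rfl
    intro ℓ hℓ
    simp only [Finset.mem_Icc] at hℓ
    rw [← Finset.card_powersetCard, ← Finset.card_powersetCard (n := d - ℓ),
        ← Finset.card_product]
    refine Finset.card_bij' (fun E _ => (E ∩ S, E ∩ T))
      (fun P _ => P.1 ∪ P.2) ?_ ?_ ?_ ?_
    · intro E hE
      simp only [Finset.mem_filter, Finset.mem_powersetCard] at hE
      obtain ⟨⟨⟨hsub, hc⟩, _⟩, hl⟩ := hE
      simp only [Finset.mem_product, Finset.mem_powersetCard]
      refine ⟨⟨Finset.inter_subset_right, hl⟩, Finset.inter_subset_right, ?_⟩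
      have := hcard E hsub hc; omega
    · intro P hP
      simp only [Finset.mem_product, Finset.mem_powersetCard] at hP
      obtain ⟨⟨h1, h1c⟩, h2, h2c⟩ := hP
      have hPd : Disjoint P.1 P.2 := hST.mono h1 h2
      have hu : P.1 ∪ P.2 ⊆ S ∪ T := Finset.union_subset_union h1 h2
      have hc : (P.1 ∪ P.2).card = d := by
        rw [Finset.card_union_of_disjoint hPd, h1c, h2c]; omega
      have hi1 : (P.1 ∪ P.2) ∩ S = P.1 := union_inter_left' hST h1 h2
      have hi2 : (P.1 ∪ P.2) ∩ T = P.2 := by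
        rw [Finset.union_comm]; exact union_inter_left' hST.symm h2 h1
      simp only [Finset.mem_filter, Finset.mem_powersetCard]
      refine ⟨⟨⟨hu, hc⟩, ?_, ?_⟩, ?_⟩
      · rw [hi1]; exact Finset.card_pos.mp (by omega)
      · rw [hi2]; exact Finset.card_pos.mp (by omega)
      · rw [hi1, h1c]
    · intro E hE
      simp only [Finset.mem_filter, Finset.mem_powersetCard] at hE
      exact hsplit E hE.1.1.1
    · intro P hP
      simp only [Finset.mem_product, Finset.mem_powersetCard] at hP
      obtain ⟨⟨h1, h1c⟩, h2, h2c⟩ := hP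
      have hi1 : (P.1 ∪ P.2) ∩ S = P.1 := union_inter_left' hST h1 h2
      have hi2 : (P.1 ∪ P.2) ∩ T = P.2 := by
        rw [Finset.union_comm]; exact union_inter_left' hST.symm h2 h1
      exact Prod.ext hi1 hi2
  · intro E hE
    simp only [Finset.mem_coe, Finset.mem_filter, Finset.mem_powersetCard] at hE
    obtain ⟨⟨hsub, hc⟩, h1, h2⟩ := hE
    have := hcard E hsub hc
    have c1 : 1 ≤ (E ∩ S).card := Finset.card_pos.2 h1
    have c2 : 1 ≤ (E ∩ T).card := Finset.card_pos.2 h2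
    simp only [Finset.mem_coe, Finset.mem_Icc]; omega

lemma fE_true_iff {n : ℕ} (V : Fin n → Bool) (E : Finset (Fin n)) (hE : E.Nonempty) :
    fE V E = true ↔ (∀ x ∈ E, V x = false) ∨ (∀ x ∈ E, V x = true) := by
  unfold fE
  rw [decide_eq_true_eq]
  constructor
  · intro h
    obtain ⟨e, he⟩ := hE
    cases hv : V e with
    | false => left; intro x hx; rw [h x hx e he, hv]
    | true => right; intro x hx; rw [h x hx e he, hv]
  · rintro (h | h) a ha b hb <;> rw [h a ha, h b hb]

lemma logic_step (a1 a2 a3 a4 : Prop) (hex : a1 ∨ a2 ∨ a3 ∨ a4) :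
    (¬((((¬a3 ∧ ¬a4) ∨ (¬a1 ∧ ¬a2))) ↔ (((¬a2 ∧ ¬a3) ∨ (¬a1 ∧ ¬a4))))) ↔
    (((¬a3 ∧ ¬a4) ∧ a1 ∧ a2) ∨ ((¬a1 ∧ ¬a2) ∧ a3 ∧ a4) ∨
     ((¬a2 ∧ ¬a3) ∧ a1 ∧ a4) ∨ ((¬a1 ∧ ¬a4) ∧ a2 ∧ a3)) := by
  tauto

theorem fact1 (n d k i j : ℕ) (hd : 2 ≤ d) (hdn : d ≤ n)
    (hik : i ≤ k) (hkn : k ≤ n) (hj : j ≤ n - k) :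
    ((((Finset.univ : Finset (Fin n)).powersetCard d).filter
        (fun E => fE (baseVec n k) E ≠ fE (flipVec n k i j) E)).card)
      = (∑ ℓ ∈ Finset.Icc 1 (d - 1), i.choose ℓ * (k - i).choose (d - ℓ))
      + (∑ ℓ ∈ Finset.Icc 1 (d - 1), j.choose ℓ * (n - k - j).choose (d - ℓ))
      + (∑ ℓ ∈ Finset.Icc 1 (d - 1), i.choose ℓ * (n - k - j).choose (d - ℓ))
      + (∑ ℓ ∈ Finset.Icc 1 (d - 1), (k - i).choose ℓ * j.choose (d - ℓ)) := by
  classical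
  have hkj : k + j ≤ n := by omega
  -- The four blocks
  set I1 : Finset (Fin n) := Iv n 0 i with hI1
  set I2 : Finset (Fin n) := Iv n i k with hI2
  set I3 : Finset (Fin n) := Iv n k (k+j) with hI3
  set I4 : Finset (Fin n) := Iv n (k+j) n with hI4
  -- key pointwise characterization
  have key : ∀ E : Finset (Fin n), E.Nonempty →
      ((fE (baseVec n k) E ≠ fE (flipVec n k i j) E) ↔
        ((E ⊆ I1 ∪ I2 ∧ (E ∩ I1).Nonempty ∧ (E ∩ I2).Nonempty) ∨
         (E ⊆ I3 ∪ I4 ∧ (E ∩ I3).Nonempty ∧ (E ∩ I4).Nonempty) ∨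
         (E ⊆ I1 ∪ I4 ∧ (E ∩ I1).Nonempty ∧ (E ∩ I4).Nonempty) ∨
         (E ⊆ I2 ∪ I3 ∧ (E ∩ I2).Nonempty ∧ (E ∩ I3).Nonempty))) := by
    intro E hE
    obtain ⟨e, he⟩ := hE
    -- generic transfer: pointwise iff to set iff
    have gen : ∀ (P U V : Fin n → Prop), (∀ x : Fin n, P x ↔ ¬ U x ∧ ¬ V x) →
        ((∀ x ∈ E, P x) ↔ ¬(∃ x ∈ E, U x) ∧ ¬(∃ x ∈ E, V x)) := by
      intro P U V hpt
      constructor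
      · intro h
        exact ⟨fun ⟨x, hx, hu⟩ => ((hpt x).1 (h x hx)).1 hu,
               fun ⟨x, hx, hv⟩ => ((hpt x).1 (h x hx)).2 hv⟩
      · rintro ⟨hu, hv⟩ x hx
        exact (hpt x).2 ⟨fun h => hu ⟨x, hx, h⟩, fun h => hv ⟨x, hx, h⟩⟩
    have nIv : ∀ (a b : ℕ), (E ∩ Iv n a b).Nonempty ↔
        ∃ x ∈ E, a ≤ (x : ℕ) ∧ (x : ℕ) < b := by
      intro a b
      constructor
      · rintro ⟨x, hx⟩
        rw [Finset.mem_inter] at hx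
        exact ⟨x, hx.1, mem_Iv.1 hx.2⟩
      · rintro ⟨x, hx, h⟩
        exact ⟨x, Finset.mem_inter.2 ⟨hx, mem_Iv.2 h⟩⟩
    have sIv : ∀ (a b a' b' : ℕ), (E ⊆ Iv n a b ∪ Iv n a' b') ↔
        ∀ x ∈ E, (a ≤ (x : ℕ) ∧ (x : ℕ) < b) ∨ (a' ≤ (x : ℕ) ∧ (x : ℕ) < b') := by
      intro a b a' b'
      constructor
      · intro h x hx
        have := h hx
        rw [Finset.mem_union, mem_Iv, mem_Iv] at this
        exact this
      · intro h x hx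
        rw [Finset.mem_union, mem_Iv, mem_Iv]
        exact h x hx
    -- the four existence propositions
    have hA : (fE (baseVec n k) E = true) ↔
        ((¬(∃ x ∈ E, k ≤ (x:ℕ) ∧ (x:ℕ) < k+j) ∧ ¬(∃ x ∈ E, k+j ≤ (x:ℕ) ∧ (x:ℕ) < n)) ∨
         (¬(∃ x ∈ E, 0 ≤ (x:ℕ) ∧ (x:ℕ) < i) ∧ ¬(∃ x ∈ E, i ≤ (x:ℕ) ∧ (x:ℕ) < k))) := by
      rw [fE_true_iff _ _ ⟨e, he⟩]
      apply or_congr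
      · exact gen (fun x => baseVec n k x = false) _ _
          (fun x => by
            have := x.isLt
            simp only [baseVec, decide_eq_false_iff_not]
            omega)
      · exact gen (fun x => baseVec n k x = true) _ _
          (fun x => by
            have := x.isLt
            simp only [baseVec, decide_eq_true_eq]
            omega)
    have hV : (fE (flipVec n k i j) E = true) ↔
        ((¬(∃ x ∈ E, i ≤ (x:ℕ) ∧ (x:ℕ) < k) ∧ ¬(∃ x ∈ E, k ≤ (x:ℕ) ∧ (x:ℕ) < k+j)) ∨
         (¬(∃ x ∈ E, 0 ≤ (x:ℕ) ∧ (x:ℕ) < i) ∧ ¬(∃ x ∈ E, k+j ≤ (x:ℕ) ∧ (x:ℕ) < n))) := by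
      rw [fE_true_iff _ _ ⟨e, he⟩]
      refine (or_congr
        (gen (fun x => flipVec n k i j x = false)
          (fun x => 0 ≤ (x:ℕ) ∧ (x:ℕ) < i) (fun x => k+j ≤ (x:ℕ) ∧ (x:ℕ) < n)
          (fun x => by
            have := x.isLt
            simp only [flipVec, decide_eq_false_iff_not]
            omega))
        (gen (fun x => flipVec n k i j x = true)
          (fun x => i ≤ (x:ℕ) ∧ (x:ℕ) < k) (fun x => k ≤ (x:ℕ) ∧ (x:ℕ) < k+j)
          (fun x => by
            have := x.isLt
            simp only [flipVec, decide_eq_true_eq]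
            omega))).trans or_comm
    have hS12 : (E ⊆ I1 ∪ I2) ↔
        (¬(∃ x ∈ E, k ≤ (x:ℕ) ∧ (x:ℕ) < k+j) ∧ ¬(∃ x ∈ E, k+j ≤ (x:ℕ) ∧ (x:ℕ) < n)) := by
      rw [hI1, hI2, sIv]
      exact gen (fun x => (0 ≤ (x:ℕ) ∧ (x:ℕ) < i) ∨ (i ≤ (x:ℕ) ∧ (x:ℕ) < k)) _ _
          (fun x => by have := x.isLt; omega)
    have hS34 : (E ⊆ I3 ∪ I4) ↔
        (¬(∃ x ∈ E, 0 ≤ (x:ℕ) ∧ (x:ℕ) < i) ∧ ¬(∃ x ∈ E, i ≤ (x:ℕ) ∧ (x:ℕ) < k)) := by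
      rw [hI3, hI4, sIv]
      exact gen (fun x => (k ≤ (x:ℕ) ∧ (x:ℕ) < k+j) ∨ (k+j ≤ (x:ℕ) ∧ (x:ℕ) < n)) _ _
        (fun x => by have := x.isLt; omega)
    have hS14 : (E ⊆ I1 ∪ I4) ↔
        (¬(∃ x ∈ E, i ≤ (x:ℕ) ∧ (x:ℕ) < k) ∧ ¬(∃ x ∈ E, k ≤ (x:ℕ) ∧ (x:ℕ) < k+j)) := by
      rw [hI1, hI4, sIv]
      exact gen (fun x => (0 ≤ (x:ℕ) ∧ (x:ℕ) < i) ∨ (k+j ≤ (x:ℕ) ∧ (x:ℕ) < n)) _ _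
        (fun x => by have := x.isLt; omega)
    have hS23 : (E ⊆ I2 ∪ I3) ↔
        (¬(∃ x ∈ E, 0 ≤ (x:ℕ) ∧ (x:ℕ) < i) ∧ ¬(∃ x ∈ E, k+j ≤ (x:ℕ) ∧ (x:ℕ) < n)) := by
      rw [hI2, hI3, sIv]
      exact gen (fun x => (i ≤ (x:ℕ) ∧ (x:ℕ) < k) ∨ (k ≤ (x:ℕ) ∧ (x:ℕ) < k+j)) _ _
        (fun x => by have := x.isLt; omega)
    have hex : (∃ x ∈ E, 0 ≤ (x:ℕ) ∧ (x:ℕ) < i) ∨ (∃ x ∈ E, i ≤ (x:ℕ) ∧ (x:ℕ) < k) ∨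
        (∃ x ∈ E, k ≤ (x:ℕ) ∧ (x:ℕ) < k+j) ∨ (∃ x ∈ E, k+j ≤ (x:ℕ) ∧ (x:ℕ) < n) := by
      have hlt := e.isLt
      rcases lt_or_ge (e : ℕ) i with h | h
      · exact Or.inl ⟨e, he, by omega⟩
      rcases lt_or_ge (e : ℕ) k with h' | h'
      · exact Or.inr (Or.inl ⟨e, he, by omega⟩)
      rcases lt_or_ge (e : ℕ) (k+j) with h'' | h''
      · exact Or.inr (Or.inr (Or.inl ⟨e, he, by omega⟩))
      · exact Or.inr (Or.inr (Or.inr ⟨e, he, by omega⟩))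
    rw [ne_eq, Bool.eq_iff_iff, hA, hV]
    rw [hS12, hS34, hS14, hS23, hI1, hI2, hI3, hI4]
    simp only [nIv]
    exact logic_step _ _ _ _ hex
  -- decompose the filter into four disjoint pieces
  set F1 := ((I1 ∪ I2).powersetCard d).filter
    (fun E => (E ∩ I1).Nonempty ∧ (E ∩ I2).Nonempty) with hF1
  set F2 := ((I3 ∪ I4).powersetCard d).filter
    (fun E => (E ∩ I3).Nonempty ∧ (E ∩ I4).Nonempty) with hF2
  set F3 := ((I1 ∪ I4).powersetCard d).filter
    (fun E => (E ∩ I1).Nonempty ∧ (E ∩ I4).Nonempty) with hF3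
  set F4 := ((I2 ∪ I3).powersetCard d).filter
    (fun E => (E ∩ I2).Nonempty ∧ (E ∩ I3).Nonempty) with hF4
  have hunion : (((Finset.univ : Finset (Fin n)).powersetCard d).filter
      (fun E => fE (baseVec n k) E ≠ fE (flipVec n k i j) E)) = F1 ∪ F2 ∪ F3 ∪ F4 := by
    ext E
    simp only [Finset.mem_filter, Finset.mem_powersetCard, Finset.mem_union,
      hF1, hF2, hF3, hF4]
    constructor
    · rintro ⟨⟨-, hc⟩, hne⟩
      have hEne : E.Nonempty := Finset.card_pos.mp (by omega)
      rcases (key E hEne).1 hne with h | h | h | h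
      · exact Or.inl (Or.inl (Or.inl ⟨⟨h.1, hc⟩, h.2⟩))
      · exact Or.inl (Or.inl (Or.inr ⟨⟨h.1, hc⟩, h.2⟩))
      · exact Or.inl (Or.inr ⟨⟨h.1, hc⟩, h.2⟩)
      · exact Or.inr ⟨⟨h.1, hc⟩, h.2⟩
    · intro h
      have hc : E.card = d := by
        rcases h with ((⟨⟨-, hc⟩, -⟩ | ⟨⟨-, hc⟩, -⟩) | ⟨⟨-, hc⟩, -⟩) | ⟨⟨-, hc⟩, -⟩ <;> exact hc
      have hEne : E.Nonempty := Finset.card_pos.mp (by omega)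
      refine ⟨⟨Finset.subset_univ E, hc⟩, (key E hEne).2 ?_⟩
      rcases h with ((⟨⟨hs, -⟩, hn⟩ | ⟨⟨hs, -⟩, hn⟩) | ⟨⟨hs, -⟩, hn⟩) | ⟨⟨hs, -⟩, hn⟩
      · exact Or.inl ⟨hs, hn⟩
      · exact Or.inr (Or.inl ⟨hs, hn⟩)
      · exact Or.inr (Or.inr (Or.inl ⟨hs, hn⟩))
      · exact Or.inr (Or.inr (Or.inr ⟨hs, hn⟩))
  -- disjointness helper
  have dhelp : ∀ (F G : Finset (Fin n)) (P Q : Finset (Fin n) → Prop)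
      [DecidablePred P] [DecidablePred Q] (X : Finset (Fin n)),
      (∀ E, P E → (E ∩ X).Nonempty) → Disjoint X G →
      Disjoint ((F.powersetCard d).filter P) ((G.powersetCard d).filter Q) := by
    intro F G P Q _ _ X hP hXG
    rw [Finset.disjoint_left]
    intro E hE1 hE2
    rw [Finset.mem_filter] at hE1 hE2
    obtain ⟨x, hx⟩ := hP E hE1.2
    rw [Finset.mem_inter] at hx
    have hsub : E ⊆ G := (Finset.mem_powersetCard.1 hE2.1).1
    exact Finset.disjoint_left.mp hXG hx.2 (hsub hx.1)
  have dj12 : Disjoint I1 I2 := disjoint_Iv le_rfl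
  have dj13 : Disjoint I1 I3 := disjoint_Iv hik
  have dj14 : Disjoint I1 I4 := disjoint_Iv (by omega)
  have dj23 : Disjoint I2 I3 := disjoint_Iv le_rfl
  have dj24 : Disjoint I2 I4 := disjoint_Iv (by omega)
  have dj34 : Disjoint I3 I4 := disjoint_Iv le_rfl
  have d12 : Disjoint F1 F2 := by
    rw [hF1, hF2]
    exact dhelp _ _ _ _ I1 (fun E h => h.1)
      (Finset.disjoint_union_right.2 ⟨dj13, dj14⟩)
  have d13 : Disjoint F1 F3 := by
    rw [hF1, hF3]
    exact dhelp _ _ _ _ I2 (fun E h => h.2)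
      (Finset.disjoint_union_right.2 ⟨dj12.symm, dj24⟩)
  have d14 : Disjoint F1 F4 := by
    rw [hF1, hF4]
    exact dhelp _ _ _ _ I1 (fun E h => h.1)
      (Finset.disjoint_union_right.2 ⟨dj12, dj13⟩)
  have d23 : Disjoint F2 F3 := by
    rw [hF2, hF3]
    exact dhelp _ _ _ _ I3 (fun E h => h.1)
      (Finset.disjoint_union_right.2 ⟨dj13.symm, dj34⟩)
  have d24 : Disjoint F2 F4 := by
    rw [hF2, hF4]
    exact dhelp _ _ _ _ I4 (fun E h => h.2)
      (Finset.disjoint_union_right.2 ⟨dj24.symm, dj34.symm⟩)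
  have d34 : Disjoint F3 F4 := by
    rw [hF3, hF4]
    exact dhelp _ _ _ _ I1 (fun E h => h.1)
      (Finset.disjoint_union_right.2 ⟨dj12, dj13⟩)
  have c1 : I1.card = i := by rw [hI1, card_Iv n 0 i (by omega)]; omega
  have c2 : I2.card = k - i := by rw [hI2, card_Iv n i k (by omega)]
  have c3 : I3.card = j := by rw [hI3, card_Iv n k (k+j) (by omega)]; omega
  have c4 : I4.card = n - k - j := by rw [hI4, card_Iv n (k+j) n le_rfl]; omega
  rw [hunion,
    Finset.card_union_of_disjoint (Finset.disjoint_union_left.2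
      ⟨Finset.disjoint_union_left.2 ⟨d14, d24⟩, d34⟩),
    Finset.card_union_of_disjoint (Finset.disjoint_union_left.2 ⟨d13, d23⟩),
    Finset.card_union_of_disjoint d12,
    hF1, hF2, hF3, hF4,
    count_split d I1 I2 dj12, count_split d I3 I4 dj34,
    count_split d I1 I4 dj14, count_split d I2 I3 dj23,
    c1, c2, c3, c4]
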